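/- For real numbers a, b, c, d with (a-d)^2 + 4bc ≥ 0 and Δ := sqrt((a-d)^2+4bc) > 0, the matrix exponential of the 2×2 matrix [[a,b],[c,d]] equals (1/Δ) · e^{(a+d)/2} · [[Δ·cosh(Δ/2)+(a-d)·sinh(Δ/2), 2b·sinh(Δ/2)], [2c·sinh(Δ/2), Δ·cosh(Δ/2)+(d-a)·sinh(Δ/2)]]. -/

import Mathlib

open Matrix Real

lemma exp_of_sq (N : Matrix (Fin 2) (Fin 2) ℝ) (k : ℝ) (hk : k ≠ 0)
    (hN : N * N = (k ^ 2) • (1 : Matrix (Fin 2) (Fin 2) ℝ)) :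
    NormedSpace.exp N =
      Real.cosh k • (1 : Matrix (Fin 2) (Fin 2) ℝ) + (Real.sinh k / k) • N := by
  rw [NormedSpace.exp_eq_tsum ℝ]
  refine HasSum.tsum_eq ?_
  have hpow : ∀ n : ℕ, N ^ (2 * n) = (k ^ (2 * n)) • (1 : Matrix (Fin 2) (Fin 2) ℝ) := by
    intro n
    rw [pow_mul, sq, hN, smul_pow, one_pow, ← pow_mul]
  refine HasSum.even_add_odd ?_ ?_
  · have := (Real.hasSum_cosh k).smul_const (1 : Matrix (Fin 2) (Fin 2) ℝ)
    convert this using 2 with n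
    · rfl
    rw [hpow n, smul_smul, div_eq_inv_mul]
  · have := ((Real.hasSum_sinh k).div_const k).smul_const N
    convert this using 2 with n
    · rfl
    rw [pow_succ, hpow n, smul_mul_assoc, one_mul, smul_smul]
    congr 1
    field_simp
    ring

theorem exp_two_by_two (a b c d : ℝ) (h : (a - d)^2 + 4*b*c ≥ 0)
    (hΔ : Real.sqrt ((a - d)^2 + 4*b*c) > 0) :
    NormedSpace.exp (!![a, b; c, d] : Matrix (Fin 2) (Fin 2) ℝ) =
      (Real.sqrt ((a - d)^2 + 4*b*c))⁻¹ •
        !![Real.exp ((a+d)/2) * (Real.sqrt ((a - d)^2 + 4*b*c) * Real.cosh (Real.sqrt ((a - d)^2 + 4*b*c) / 2)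
              + (a - d) * Real.sinh (Real.sqrt ((a - d)^2 + 4*b*c) / 2)),
           Real.exp ((a+d)/2) * (2 * b * Real.sinh (Real.sqrt ((a - d)^2 + 4*b*c) / 2));
           Real.exp ((a+d)/2) * (2 * c * Real.sinh (Real.sqrt ((a - d)^2 + 4*b*c) / 2)),
           Real.exp ((a+d)/2) * (Real.sqrt ((a - d)^2 + 4*b*c) * Real.cosh (Real.sqrt ((a - d)^2 + 4*b*c) / 2)
              + (d - a) * Real.sinh (Real.sqrt ((a - d)^2 + 4*b*c) / 2))] := by
  set Δ : ℝ := Real.sqrt ((a - d)^2 + 4*b*c) with hΔdef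
  have hΔ2 : Δ ^ 2 = (a - d)^2 + 4*b*c := Real.sq_sqrt h
  have hΔne : Δ ≠ 0 := ne_of_gt hΔ
  set t : ℝ := (a + d) / 2 with ht
  set N : Matrix (Fin 2) (Fin 2) ℝ := !![(a-d)/2, b; c, (d-a)/2] with hNdef
  have hk : Δ / 2 ≠ 0 := by positivity
  have hNN : N * N = ((Δ/2) ^ 2) • (1 : Matrix (Fin 2) (Fin 2) ℝ) := by
    ext i j
    fin_cases i <;> fin_cases j <;>
      simp [hNdef, Matrix.mul_apply, Fin.sum_univ_two, Matrix.one_apply] <;> nlinarith [hΔ2]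
  have hM : (!![a, b; c, d] : Matrix (Fin 2) (Fin 2) ℝ) =
      t • (1 : Matrix (Fin 2) (Fin 2) ℝ) + N := by
    ext i j
    fin_cases i <;> fin_cases j <;> simp [hNdef, ht, Matrix.one_apply] <;> ring
  have hcomm : Commute (t • (1 : Matrix (Fin 2) (Fin 2) ℝ)) N :=
    (Commute.one_left N).smul_left t
  rw [hM, Matrix.exp_add_of_commute _ _ hcomm,
    exp_of_sq N (Δ/2) hk hNN]
  have hsmul1 : NormedSpace.exp (t • (1 : Matrix (Fin 2) (Fin 2) ℝ)) =
      Real.exp t • (1 : Matrix (Fin 2) (Fin 2) ℝ) := by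
    have h1 : t • (1 : Matrix (Fin 2) (Fin 2) ℝ) = Matrix.diagonal (fun _ => t) := by
      ext i j
      simp [Matrix.diagonal_apply, Matrix.one_apply]
    rw [h1, Matrix.exp_diagonal]
    ext i j
    simp [Matrix.diagonal_apply, Matrix.one_apply, Pi.exp_def, ← Real.exp_eq_exp_ℝ]
  rw [hsmul1]
  ext i j
  fin_cases i <;> fin_cases j <;>
    simp [hNdef, Matrix.mul_apply, Fin.sum_univ_two, Matrix.one_apply] <;>
    field_simp <;> ring
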